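/- Let l be a positive integer and let S be a tree containing pairwise vertex-disjoint paths P₁,…,P_l. Then there exist two subtrees S₁ and S₂ which divide S such that S₁ contains at least l/3 − 1 of the paths P_i as subgraphs, and S₂ also contains at least l/3 − 1 of the paths P_i as subgraphs. -/

import Mathlib

open SimpleGraph Finset

/-- Two subtrees (connected subgraphs) `A` and `B` *divide* the tree `S` if together
they cover `S` and they intersect in exactly one vertex. -/
def Divides {V : Type*} {S : SimpleGraph V} (A B : S.Subgraph) : Prop :=
  A.Connected ∧ B.Connected ∧ A ⊔ B = ⊤ ∧ ∃ v, A.verts ∩ B.verts = {v}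

namespace Div6

variable {V : Type*} {S : SimpleGraph V} {v w x y : V}

/-- The branch of `S - v` containing `w`: vertices reachable from `w` by a walk avoiding `v`. -/
def Br (S : SimpleGraph V) (v w : V) : Set V := {x | ∃ p : S.Walk w x, v ∉ p.support}

lemma self_mem_br (h : w ≠ v) : w ∈ Br S v w :=
  ⟨Walk.nil, by simpa using fun h' => h h'.symm⟩

lemma not_mem_br : v ∉ Br S v w := fun ⟨p, hp⟩ => hp p.end_mem_support

lemma ne_of_mem_br (hx : x ∈ Br S v w) : x ≠ v := fun h => not_mem_br (h ▸ hx)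

lemma br_closed (hx : x ∈ Br S v w) (ha : S.Adj x y) (hy : y ≠ v) : y ∈ Br S v w := by
  obtain ⟨p, hp⟩ := hx
  refine ⟨p.concat ha, ?_⟩
  rw [Walk.support_concat]
  intro h
  rcases List.mem_append.mp h with h | h
  · exact hp h
  · exact hy (List.mem_singleton.mp h).symm

lemma support_subset_br (p : S.Walk w x) (hp : v ∉ p.support) :
    ∀ z ∈ p.support, z ∈ Br S v w := by
  classical
  exact fun z hz => ⟨p.takeUntil z hz, fun h => hp (p.support_takeUntil_subset hz h)⟩

lemma br_eq_of_mem (hx : x ∈ Br S v w) : Br S v w = Br S v x := by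
  obtain ⟨p, hp⟩ := hx
  ext z
  constructor
  · rintro ⟨q, hq⟩
    refine ⟨p.reverse.append q, ?_⟩
    rw [Walk.mem_support_append_iff]
    rintro (h | h)
    · exact hp (by rwa [Walk.support_reverse, List.mem_reverse] at h)
    · exact hq h
  · rintro ⟨q, hq⟩
    refine ⟨p.append q, ?_⟩
    rw [Walk.mem_support_append_iff]
    rintro (h | h)
    · exact hp h
    · exact hq h

/-- Every vertex `x ≠ v` lies in the branch of some neighbor of `v`. -/
lemma exists_br (hconn : S.Connected) (hxv : x ≠ v) : ∃ w, S.Adj v w ∧ x ∈ Br S v w := by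
  classical
  obtain ⟨p⟩ := hconn x v
  have hv : v ∈ p.support := p.end_mem_support
  set q := p.takeUntil v hv with hqdef
  have hcount : q.support.count v = 1 := p.count_support_takeUntil_eq_one hv
  obtain ⟨w, hadj, t, ht⟩ := Walk.exists_eq_cons_of_ne (Ne.symm hxv) q.reverse
  refine ⟨w, hadj, t, ?_⟩
  intro hvt
  have hpos : 0 < t.support.count v := List.count_pos_iff.mpr hvt
  have : 2 ≤ q.reverse.support.count v := by
    rw [ht, Walk.support_cons, List.count_cons_self]
    omega
  rw [Walk.support_reverse, List.count_reverse, hcount] at this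
  omega

/-- Sub-branches at a neighbor `w` of `v` not containing `v` are contained in the branch of `w`. -/
lemma br_subset_br (hvw : S.Adj v w) (hwy : S.Adj w y) (hv : v ∉ Br S w y) :
    Br S w y ⊆ Br S v w := by
  rintro x ⟨q, hq⟩
  have hvq : v ∉ q.support := fun h => hv (support_subset_br q hq v h)
  refine ⟨Walk.cons hwy q, ?_⟩
  rw [Walk.support_cons]
  intro h
  rcases List.mem_cons.mp h with h | h
  · exact hvw.ne h
  · exact hvq h

/-- In a tree, the branch at `w` containing `v` and the branch at `v` containing `w`
are disjoint. -/
lemma br_disj (hT : S.IsTree) (hvw : S.Adj v w) : Br S w v ∩ Br S v w = ∅ := by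
  classical
  ext x
  simp only [Set.mem_inter_iff, Set.mem_empty_iff_false, iff_false, not_and]
  rintro ⟨p, hp⟩ ⟨q, hq⟩
  -- p : Walk v x avoiding w ; q : Walk w x avoiding v
  have hp' : w ∉ p.bypass.support := fun h => hp (p.support_bypass_subset h)
  have hq' : v ∉ q.bypass.support := fun h => hq (q.support_bypass_subset h)
  have hpath1 : (Walk.cons hvw.symm p.bypass).IsPath := p.bypass_isPath.cons hp'
  have := hT.2.path_unique ⟨Walk.cons hvw.symm p.bypass, hpath1⟩ ⟨q.bypass, q.bypass_isPath⟩
  apply hq'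
  have hsup : (Walk.cons hvw.symm p.bypass).support = q.bypass.support := by
    exact congrArg (fun (r : S.Path w x) => r.1.support) this
  rw [← hsup, Walk.support_cons]
  exact List.mem_cons_of_mem _ p.bypass.start_mem_support

/-- Reachability inside the induced subgraph on `s` along a walk with support inside `s`. -/
lemma reachable_induce {s : Set V} {a b : V} (p : S.Walk a b) (hp : ∀ x ∈ p.support, x ∈ s)
    (ha : a ∈ s) (hb : b ∈ s) :
    ((⊤ : S.Subgraph).induce s).coe.Reachable ⟨a, ha⟩ ⟨b, hb⟩ := by
  induction p with
  | nil => rfl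
  | @cons a c b h q ih =>
    have hc : c ∈ s := hp c (by simp [Walk.support_cons])
    have hadj : ((⊤ : S.Subgraph).induce s).coe.Adj ⟨a, ha⟩ ⟨c, hc⟩ := by
      simp only [Subgraph.coe_adj, Subgraph.induce_adj, Subgraph.top_adj]
      exact ⟨ha, hc, h⟩
    exact hadj.reachable.trans (ih (fun x hx => hp x (by simp [Walk.support_cons, hx])) hc hb)

/-- Greedy selection lemma. -/
lemma greedy {α : Type*} [DecidableEq α] (t : Finset α) (f : α → ℕ) (l : ℕ)
    (hsmall : ∀ a ∈ t, 3 * f a + 3 < l) (htot : l ≤ (∑ a ∈ t, f a) + 1) :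
    ∃ s ⊆ t, l ≤ 3 * (∑ a ∈ s, f a) + 3 ∧ 3 * (∑ a ∈ s, f a) ≤ 2 * l := by
  classical
  set 𝒮 := t.powerset.filter (fun s => l ≤ 3 * (∑ a ∈ s, f a) + 3) with h𝒮
  have ht : t ∈ 𝒮 := by
    simp only [h𝒮, mem_filter, mem_powerset]
    exact ⟨subset_rfl, by omega⟩
  obtain ⟨s, hs, hmin⟩ := 𝒮.exists_min_image card ⟨t, ht⟩
  simp only [h𝒮, mem_filter, mem_powerset] at hs
  refine ⟨s, hs.1, hs.2, ?_⟩
  rcases s.eq_empty_or_nonempty with rfl | ⟨a, ha⟩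
  · simp only [sum_empty, mul_zero]
    omega
  · have herase : s.erase a ∉ 𝒮 := by
      intro h
      have := hmin _ h
      have := card_erase_lt_of_mem ha
      omega
    simp only [h𝒮, mem_filter, mem_powerset, not_and, not_le] at herase
    have h1 : 3 * (∑ b ∈ s.erase a, f b) + 3 < l :=
      herase ((erase_subset a s).trans hs.1)
    have h2 : 3 * f a + 3 < l := hsmall a (hs.1 ha)
    have h3 : (∑ b ∈ s, f b) = f a + ∑ b ∈ s.erase a, f b := (add_sum_erase s f ha).symm
    omega


open Classical in
noncomputable def Idx {l : ℕ} {f g : Fin l → V} (P : ∀ i, S.Walk (f i) (g i)) (A : Set V) :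
    Finset (Fin l) :=
  Finset.univ.filter fun i => ∀ x ∈ (P i).support, x ∈ A

lemma mem_Idx {l : ℕ} {f g : Fin l → V} {P : ∀ i, S.Walk (f i) (g i)} {A : Set V}
    {i : Fin l} : i ∈ Idx P A ↔ ∀ x ∈ (P i).support, x ∈ A := by
  simp [Idx]

lemma Idx_mono {l : ℕ} {f g : Fin l → V} (P : ∀ i, S.Walk (f i) (g i)) {A B : Set V}
    (h : A ⊆ B) : Idx P A ⊆ Idx P B := fun i hi =>
  mem_Idx.mpr fun x hx => h (mem_Idx.mp hi x hx)

lemma Idx_disjoint {l : ℕ} {f g : Fin l → V} (P : ∀ i, S.Walk (f i) (g i)) {A B : Set V}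
    (h : A ∩ B = ∅) : Disjoint (Idx P A) (Idx P B) := by
  rw [Finset.disjoint_left]
  intro i hiA hiB
  have h1 := mem_Idx.mp hiA (f i) (P i).start_mem_support
  have h2 := mem_Idx.mp hiB (f i) (P i).start_mem_support
  exact absurd (Set.mem_inter h1 h2) (by rw [h]; exact Set.notMem_empty _)

end Div6

open Div6

theorem statement_6 {V : Type*} [Fintype V] (l : ℕ) (hl : 0 < l)
    (S : SimpleGraph V) (hS : S.IsTree)
    (u v : Fin l → V) (P : (i : Fin l) → S.Walk (u i) (v i))
    (hP : ∀ i, (P i).IsPath)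
    (hdisj : ∀ i j, i ≠ j → List.Disjoint (P i).support (P j).support) :
    ∃ A B : S.Subgraph, Divides A B ∧
      (∃ I : Finset (Fin l), (l : ℝ) / 3 - 1 ≤ I.card ∧
        ∀ i ∈ I, (P i).toSubgraph ≤ A) ∧
      (∃ J : Finset (Fin l), (l : ℝ) / 3 - 1 ≤ J.card ∧
        ∀ i ∈ J, (P i).toSubgraph ≤ B) := by
  classical
  have htopc : (⊤ : S.Subgraph).Connected := by
    rw [Subgraph.connected_iff']
    exact (Subgraph.topIso (G := S)).connected_iff.mpr hS.1
  by_cases hl3 : l ≤ 3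
  · -- small case : A = ⊤, B = a single vertex
    set v0 := u ⟨0, hl⟩
    refine ⟨⊤, S.singletonSubgraph v0, ⟨htopc, SimpleGraph.Subgraph.singletonSubgraph_connected, ?_, v0, ?_⟩,
      ⟨Finset.univ, ?_, fun i _ => le_top⟩, ⟨∅, ?_, by simp⟩⟩
    · exact top_sup_eq _
    · simp [SimpleGraph.singletonSubgraph]
    · rw [Finset.card_univ, Fintype.card_fin]
      have : (0:ℝ) ≤ l := Nat.cast_nonneg l
      linarith
    · simp only [Finset.card_empty, Nat.cast_zero]
      have : (l:ℝ) ≤ 3 := by exact_mod_cast hl3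
      linarith
  push_neg at hl3  -- 3 < l
  -- notation
  set g : Set V → ℕ := fun A => (Idx P A).card with hg
  have hconn : S.Connected := hS.1
  -- at most one path passes through any vertex
  have hone : ∀ z : V, (Finset.univ.filter fun i => z ∈ (P i).support).card ≤ 1 := by
    intro z
    rw [Finset.card_le_one]
    intro i hi j hj
    simp only [Finset.mem_filter] at hi hj
    by_contra hij
    exact hdisj i j hij hi.2 hj.2
  have havoid : ∀ z : V, l - 1 ≤ (Finset.univ.filter fun i => z ∉ (P i).support).card := by
    intro z
    have := Finset.card_filter_add_card_filter_not
      (s := (Finset.univ : Finset (Fin l))) (p := fun i => z ∈ (P i).support)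
    have h1 := hone z
    simp only [Finset.card_univ, Fintype.card_fin] at this
    omega
  -- there is an edge
  obtain ⟨a0, b0, hab⟩ : ∃ a b, S.Adj a b := by
    have h01 : (⟨0, hl⟩ : Fin l) ≠ ⟨1, by omega⟩ := by simp [Fin.ext_iff]
    have hne : u ⟨0, hl⟩ ≠ u ⟨1, by omega⟩ := by
      intro h
      exact hdisj _ _ h01 ((h ▸ (P _).start_mem_support)) (P _).start_mem_support
    obtain ⟨p⟩ := hconn (u ⟨0, hl⟩) (u ⟨1, by omega⟩)
    obtain ⟨w', hadj, _, _⟩ := SimpleGraph.Walk.exists_eq_cons_of_ne hne p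
    exact ⟨_, _, hadj⟩
  -- the measure to minimize
  set M := Fintype.card V with hM
  set μ : V × V → ℕ := fun p => g (Br S p.1 p.2) * (M + 1) + (Br S p.1 p.2).ncard with hμ
  set QF : Finset (V × V) := Finset.univ.filter
    (fun p => S.Adj p.1 p.2 ∧ ∀ y, S.Adj p.1 y → g (Br S p.1 y) ≤ g (Br S p.1 p.2)) with hQF
  have hQFne : QF.Nonempty := by
    obtain ⟨w1, hw1, hwmax⟩ := (Finset.univ.filter (S.Adj a0 ·)).exists_max_image
      (fun y => g (Br S a0 y)) ⟨b0, by simp [hab]⟩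
    simp only [Finset.mem_filter, Finset.mem_univ, true_and] at hw1
    refine ⟨(a0, w1), ?_⟩
    simp only [hQF, Finset.mem_filter, Finset.mem_univ, true_and]
    exact ⟨hw1, fun y hy => hwmax y (by simp [hy])⟩
  obtain ⟨⟨vc, wc⟩, hvcQ, hmin⟩ := QF.exists_min_image μ hQFne
  simp only [hQF, Finset.mem_filter, Finset.mem_univ, true_and] at hvcQ
  obtain ⟨hadjc, hmaxc⟩ := hvcQ
  have hncard_le : ∀ s : Set V, s.ncard ≤ M := by
    intro s
    rw [hM, ← Nat.card_eq_fintype_card, ← Set.ncard_univ]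
    exact Set.ncard_le_ncard (Set.subset_univ s) Set.finite_univ
  have hg_le : ∀ s : Set V, g s ≤ l := by
    intro s
    have := Finset.card_le_card (Finset.subset_univ (Idx P s))
    rwa [Finset.card_univ, Fintype.card_fin] at this
  -- Key claim : the maximal branch at vc has weight at most 2l/3
  have hkey : 3 * g (Br S vc wc) ≤ 2 * l := by
    by_contra hbig
    push_neg at hbig
    set C := Br S vc wc with hC
    -- the branch at wc containing vc is light
    have hDC : Br S wc vc ∩ C = ∅ := br_disj hS hadjc
    have hsum : g (Br S wc vc) + g C ≤ l := by
      have hdis := Idx_disjoint P hDC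
      have := Finset.card_union_of_disjoint hdis
      have hle : (Idx P (Br S wc vc) ∪ Idx P C).card ≤ l := by
        have := Finset.card_le_card (Finset.subset_univ (Idx P (Br S wc vc) ∪ Idx P C))
        rwa [Finset.card_univ, Fintype.card_fin] at this
      rw [hg]
      simp only at this ⊢
      omega
    -- best neighbor of wc
    obtain ⟨y1, hy1, hymax⟩ := (Finset.univ.filter (S.Adj wc ·)).exists_max_image
      (fun y => g (Br S wc y)) ⟨vc, by simp [hadjc.symm]⟩
    simp only [Finset.mem_filter, Finset.mem_univ, true_and] at hy1
    have hyQ : (wc, y1) ∈ QF := by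
      simp only [hQF, Finset.mem_filter, Finset.mem_univ, true_and]
      exact ⟨hy1, fun y hy => hymax y (by simp [hy])⟩
    have hlt : μ (wc, y1) < μ (vc, wc) := by
      by_cases hvin : vc ∈ Br S wc y1
      · -- branch of y1 is the branch containing vc
        have heq : Br S wc y1 = Br S wc vc := br_eq_of_mem hvin
        have hglt : g (Br S wc y1) < g C := by
          rw [heq]
          omega
        calc μ (wc, y1) = g (Br S wc y1) * (M + 1) + (Br S wc y1).ncard := rfl
          _ ≤ g (Br S wc y1) * (M + 1) + M := by
              exact Nat.add_le_add_left (hncard_le _) _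
          _ < (g (Br S wc y1) + 1) * (M + 1) := by
              rw [add_mul, one_mul]; omega
          _ ≤ g C * (M + 1) := Nat.mul_le_mul_right _ hglt
          _ ≤ μ (vc, wc) := Nat.le_add_right _ _
      · -- branch of y1 is strictly inside C
        have hsub : Br S wc y1 ⊆ C := br_subset_br hadjc hy1 hvin
        have hssub : Br S wc y1 ⊂ C := by
          refine ⟨hsub, fun hsup => ?_⟩
          exact not_mem_br (hsup (self_mem_br hadjc.ne'))
        have hnlt : (Br S wc y1).ncard < C.ncard :=
          Set.ncard_lt_ncard hssub (Set.toFinite C)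
        have hgle : g (Br S wc y1) ≤ g C := by
          rw [hg]
          exact Finset.card_le_card (Idx_mono P hsub)
        calc μ (wc, y1) = g (Br S wc y1) * (M + 1) + (Br S wc y1).ncard := rfl
          _ ≤ g C * (M + 1) + (Br S wc y1).ncard := by
              exact Nat.add_le_add_right (Nat.mul_le_mul_right _ hgle) _
          _ < g C * (M + 1) + C.ncard := Nat.add_lt_add_left hnlt _
          _ = μ (vc, wc) := rfl
    exact absurd (hmin _ hyQ) (by omega)
  -- every branch at vc is light
  have hall : ∀ x : V, x ≠ vc → 3 * g (Br S vc x) ≤ 2 * l := by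
    intro x hx
    obtain ⟨w', hw', hxw⟩ := exists_br hconn hx
    have : Br S vc w' = Br S vc x := br_eq_of_mem hxw
    calc 3 * g (Br S vc x) = 3 * g (Br S vc w') := by rw [this]
      _ ≤ 3 * g (Br S vc wc) := by
          have := hmaxc w' hw'
          omega
      _ ≤ 2 * l := hkey
  -- the distinct branches at vc
  set ℬ : Finset (Set V) := (Finset.univ.filter (· ≠ vc)).image (Br S vc ·) with hℬ
  have hℬmem : ∀ C ∈ ℬ, ∃ x, x ≠ vc ∧ C = Br S vc x := by
    intro C hC
    simp only [hℬ, Finset.mem_image, Finset.mem_filter, Finset.mem_univ, true_and] at hC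
    obtain ⟨x, hx, hxC⟩ := hC
    exact ⟨x, hx, hxC.symm⟩
  have hclasses : ∀ C ∈ ℬ, ∀ z ∈ C, C = Br S vc z := by
    intro C hC z hz
    obtain ⟨x, _, rfl⟩ := hℬmem C hC
    exact br_eq_of_mem hz
  have hℬdisj : ∀ C ∈ ℬ, ∀ C' ∈ ℬ, C ≠ C' → C ∩ C' = ∅ := by
    intro C hC C' hC' hne
    by_contra hne'
    obtain ⟨z, hzC, hzC'⟩ := Set.inter_nonempty.mp (Set.nonempty_iff_ne_empty.mpr hne')
    exact hne ((hclasses C hC z hzC).trans (hclasses C' hC' z hzC').symm)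
  have hℬv : ∀ C ∈ ℬ, vc ∉ C := by
    intro C hC
    obtain ⟨x, _, rfl⟩ := hℬmem C hC
    exact not_mem_br
  have hℬclosed : ∀ C ∈ ℬ, ∀ a ∈ C, ∀ b, S.Adj a b → b ≠ vc → b ∈ C := by
    intro C hC a ha b hab hb
    obtain ⟨x, _, rfl⟩ := hℬmem C hC
    exact br_closed ha hab hb
  -- total weight of branches
  have hsupp_in_br : ∀ i : Fin l, vc ∉ (P i).support → i ∈ Idx P (Br S vc (u i)) := by
    intro i hi
    exact mem_Idx.mpr (support_subset_br (P i) hi)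
  have htot : l - 1 ≤ ∑ C ∈ ℬ, g C := by
    have hsub : (Finset.univ.filter fun i => vc ∉ (P i).support) ⊆
        ℬ.biUnion (fun C => Idx P C) := by
      intro i hi
      simp only [Finset.mem_filter, Finset.mem_univ, true_and] at hi
      rw [Finset.mem_biUnion]
      refine ⟨Br S vc (u i), ?_, hsupp_in_br i hi⟩
      simp only [hℬ, Finset.mem_image, Finset.mem_filter, Finset.mem_univ, true_and]
      exact ⟨u i, fun h => hi (h ▸ (P i).start_mem_support), rfl⟩
    have hcard := Finset.card_biUnion (s := ℬ) (t := fun C => Idx P C)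
      (fun C hC C' hC' hne => Idx_disjoint P (hℬdisj C hC C' hC' hne))
    have := Finset.card_le_card hsub
    rw [hcard] at this
    calc l - 1 ≤ _ := havoid vc
      _ ≤ _ := this
  -- select a good union of branches
  obtain ⟨s, hsℬ, hslow, hshigh⟩ :
      ∃ s ⊆ ℬ, l ≤ 3 * (∑ C ∈ s, g C) + 3 ∧ 3 * (∑ C ∈ s, g C) ≤ 2 * l := by
    by_cases hbig : ∃ C ∈ ℬ, l ≤ 3 * g C + 3
    · obtain ⟨C, hC, hCl⟩ := hbig
      refine ⟨{C}, by simpa using hC, ?_, ?_⟩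
      · rwa [Finset.sum_singleton]
      · rw [Finset.sum_singleton]
        obtain ⟨x, hx, rfl⟩ := hℬmem C hC
        exact hall x hx
    · push_neg at hbig
      exact greedy ℬ g l hbig (by omega)
  set U : Set V := ⋃₀ (↑s : Set (Set V)) with hU
  have hUv : vc ∉ U := by
    rintro ⟨C, hC, hvC⟩
    exact hℬv C (hsℬ hC) hvC
  have hUclosed : ∀ a ∈ U, ∀ b, S.Adj a b → b ≠ vc → b ∈ U := by
    rintro a ⟨C, hC, haC⟩ b hab hb
    exact ⟨C, hC, hℬclosed C (hsℬ hC) a haC b hab hb⟩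
  -- weight of the union
  have hIdxU : Idx P U = s.biUnion (fun C => Idx P C) := by
    ext i
    rw [Finset.mem_biUnion]
    constructor
    · intro hi
      have hui : u i ∈ U := mem_Idx.mp hi (u i) (P i).start_mem_support
      obtain ⟨C, hCs, huiC⟩ := hui
      refine ⟨C, hCs, mem_Idx.mpr fun z hz => ?_⟩
      have hvsupp : vc ∉ (P i).support := fun h => hUv (mem_Idx.mp hi vc h)
      have hz' : z ∈ Br S vc (u i) := support_subset_br (P i) hvsupp z hz
      rwa [← hclasses C (hsℬ hCs) (u i) huiC] at hz'
    · rintro ⟨C, hCs, hiC⟩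
      exact Idx_mono P (fun z hz => Set.mem_sUnion.mpr ⟨C, hCs, hz⟩) hiC
  have hgU : g U = ∑ C ∈ s, g C := by
    rw [hg]
    simp only
    rw [hIdxU]
    exact Finset.card_biUnion
      (fun C hC C' hC' hne => Idx_disjoint P (hℬdisj C (hsℬ hC) C' (hsℬ hC') hne))
  -- the two sides
  set sA : Set V := {vc} ∪ U with hsA
  set sB : Set V := Uᶜ with hsB
  have hvA : vc ∈ sA := Or.inl rfl
  have hvB : vc ∈ sB := hUv
  set A : S.Subgraph := (⊤ : S.Subgraph).induce sA with hA
  set B : S.Subgraph := (⊤ : S.Subgraph).induce sB with hB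
  -- walks to vc staying in branches
  have hwalk : ∀ x : V, x ≠ vc → ∃ p : S.Walk vc x,
      ∀ z ∈ p.support, z ∈ ({vc} : Set V) ∪ Br S vc x := by
    intro x hx
    obtain ⟨w', hw', hxw⟩ := exists_br hconn hx
    obtain ⟨q, hq⟩ := id hxw
    refine ⟨Walk.cons hw' q, ?_⟩
    intro z hz
    rw [Walk.support_cons] at hz
    rcases List.mem_cons.mp hz with rfl | hz
    · exact Or.inl rfl
    · right
      rw [← br_eq_of_mem hxw]
      exact support_subset_br q hq z hz
  -- connectivity of A
  have hAconn : A.Connected := by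
    rw [Subgraph.connected_iff]
    constructor
    · rw [Subgraph.preconnected_iff]
      rintro ⟨x, hx⟩ ⟨y, hy⟩
      have hreach : ∀ z (hz : z ∈ sA),
          ((⊤ : S.Subgraph).induce sA).coe.Reachable ⟨vc, hvA⟩ ⟨z, hz⟩ := by
        intro z hz
        rcases id hz with rfl | hzU
        · rfl
        · have hzvc : z ≠ vc := fun h => hUv (h ▸ hzU)
          obtain ⟨p, hp⟩ := hwalk z hzvc
          refine reachable_induce p (fun t ht => ?_) hvA hz
          rcases hp t ht with h | h
          · exact Or.inl h
          · right
            obtain ⟨C, hCs, hzC⟩ := Set.mem_sUnion.mp hzU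
            rw [← hclasses C (hsℬ hCs) z hzC] at h
            exact Set.mem_sUnion.mpr ⟨C, hCs, h⟩
      exact ((hreach x hx).symm.trans (hreach y hy))
    · exact ⟨vc, hvA⟩
  -- connectivity of B
  have hBconn : B.Connected := by
    rw [Subgraph.connected_iff]
    constructor
    · rw [Subgraph.preconnected_iff]
      rintro ⟨x, hx⟩ ⟨y, hy⟩
      have hreach : ∀ z (hz : z ∈ sB),
          ((⊤ : S.Subgraph).induce sB).coe.Reachable ⟨vc, hvB⟩ ⟨z, hz⟩ := by
        intro z hz
        by_cases hzvc : z = vc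
        · subst hzvc; rfl
        · obtain ⟨p, hp⟩ := hwalk z hzvc
          have hbr : Br S vc z ∩ U = ∅ := by
            ext t
            simp only [Set.mem_inter_iff, Set.mem_empty_iff_false, iff_false, not_and]
            rintro ht ⟨C, hCs, htC⟩
            apply hz
            refine ⟨C, hCs, ?_⟩
            rw [hclasses C (hsℬ hCs) t htC, ← br_eq_of_mem ht]
            exact self_mem_br hzvc
          refine reachable_induce p (fun t ht => ?_) hvB hz
          rcases hp t ht with rfl | h
          · exact hvB
          · intro htU
            have : t ∈ Br S vc z ∩ U := ⟨h, htU⟩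
            rw [hbr] at this
            exact this
      exact ((hreach x hx).symm.trans (hreach y hy))
    · exact ⟨vc, hvB⟩
  -- A ⊔ B = ⊤
  have hsup : A ⊔ B = ⊤ := by
    apply le_antisymm le_top
    constructor
    · intro z _
      rw [Subgraph.verts_sup]
      by_cases hzU : z ∈ U
      · exact Or.inl (Or.inr hzU)
      · exact Or.inr hzU
    · intro a b hab
      rw [Subgraph.top_adj] at hab
      rw [Subgraph.sup_adj]
      by_cases haU : a ∈ U
      · by_cases hbvc : b = vc
        · subst hbvc
          exact Or.inl ⟨Or.inr haU, Or.inl rfl, hab⟩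
        · exact Or.inl ⟨Or.inr haU, Or.inr (hUclosed a haU b hab hbvc), hab⟩
      · by_cases hbU : b ∈ U
        · by_cases havc : a = vc
          · subst havc
            exact Or.inl ⟨Or.inl rfl, Or.inr hbU, hab⟩
          · exact absurd (hUclosed b hbU a hab.symm havc) haU
        · exact Or.inr ⟨haU, hbU, hab⟩
  -- vertex intersection
  have hinter : A.verts ∩ B.verts = {vc} := by
    rw [hA, hB]
    simp only [Subgraph.induce_verts]
    ext z
    simp only [Set.mem_inter_iff, Set.mem_singleton_iff]
    constructor
    · rintro ⟨h1 | h1, h2⟩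
      · exact h1
      · exact absurd h1 h2
    · rintro rfl
      exact ⟨hvA, hvB⟩
  -- path containment helper
  have hcontain : ∀ (s' : Set V) (i : Fin l), (∀ z ∈ (P i).support, z ∈ s') →
      (P i).toSubgraph ≤ (⊤ : S.Subgraph).induce s' := by
    intro s' i hi
    constructor
    · intro z hz
      rw [Walk.mem_verts_toSubgraph] at hz
      exact hi z hz
    · intro a b hab
      have ha := (P i).toSubgraph.edge_vert hab
      have hb := (P i).toSubgraph.edge_vert hab.symm
      rw [Walk.mem_verts_toSubgraph] at ha hb
      exact ⟨hi a ha, hi b hb, Subgraph.top_adj.mpr ((P i).toSubgraph.adj_sub hab)⟩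
  -- the two index sets
  refine ⟨A, B, ⟨hAconn, hBconn, hsup, vc, hinter⟩,
    ⟨Idx P U, ?_, ?_⟩, ⟨Idx P (Uᶜ \ {vc}), ?_, ?_⟩⟩
  · -- card bound for A side
    have h1 : (l:ℝ) ≤ 3 * (Idx P U).card + 3 := by
      have : l ≤ 3 * g U + 3 := by rw [hgU]; exact hslow
      exact_mod_cast this
    linarith
  · intro i hi
    exact hcontain sA i (fun z hz => Or.inr (mem_Idx.mp hi z hz))
  · -- card bound for B side
    have hBsub : (Finset.univ.filter fun i => vc ∉ (P i).support) \ Idx P U ⊆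
        Idx P (Uᶜ \ {vc}) := by
      intro i hi
      rw [Finset.mem_sdiff] at hi
      obtain ⟨hi1, hi2⟩ := hi
      simp only [Finset.mem_filter, Finset.mem_univ, true_and] at hi1
      refine mem_Idx.mpr fun z hz => ⟨?_, fun h => hi1 (h ▸ hz)⟩
      intro hzU
      apply hi2
      refine mem_Idx.mpr fun t ht => ?_
      obtain ⟨C, hCs, hzC⟩ := hzU
      have h1 : t ∈ Br S vc (u i) := support_subset_br (P i) hi1 t ht
      have h2 : z ∈ Br S vc (u i) := support_subset_br (P i) hi1 z hz
      refine ⟨C, hCs, ?_⟩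
      rw [hclasses C (hsℬ hCs) z hzC, ← br_eq_of_mem h2]
      exact h1
    have hnat : l ≤ (Idx P (Uᶜ \ {vc})).card + g U + 1 := by
      have h1 := Finset.card_le_card hBsub
      have h2 := Finset.le_card_sdiff (Idx P U) (Finset.univ.filter fun i => vc ∉ (P i).support)
      have h3 := havoid vc
      have e1 : g U = (Idx P U).card := rfl
      omega
    have hr1 : (l:ℝ) ≤ (Idx P (Uᶜ \ {vc})).card + g U + 1 := by exact_mod_cast hnat
    have hr2 : 3 * (g U : ℝ) ≤ 2 * l := by
      have : 3 * g U ≤ 2 * l := by rw [hgU]; exact hshigh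
      exact_mod_cast this
    linarith
  · intro i hi
    exact hcontain sB i (fun z hz => ((mem_Idx.mp hi z hz)).1)
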